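/- Let H ⊆ [p]^m be a finite class such that every vertex of its one-inclusion graph has k-degree at most D (more generally, such that every nonempty subclass contains a vertex of k-degree at most D within that subclass's one-inclusion graph). If the average k-degree of every subclass of H is at most D, then there exists a k-list orientation σ of G(H) with maximum k-outdegree at most D. -/

import Mathlib

/-- The edge of the one-inclusion graph of `G ⊆ [p]^m` in direction `i` through `v`. -/
def edge {m p : ℕ} (G : Finset (Fin m → Fin p)) (i : Fin m) (v : Fin m → Fin p) :
    Finset (Fin m → Fin p) :=
  G.filter fun g => ∀ j, j ≠ i → g j = v j

lemma mem_edge_self {m p : ℕ} {G : Finset (Fin m → Fin p)} (i : Fin m) {v : Fin m → Fin p}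
    (h : v ∈ G) : v ∈ edge G i v := by
  simp [edge, h]

lemma edge_subset {m p : ℕ} (G : Finset (Fin m → Fin p)) (i : Fin m) (v : Fin m → Fin p) :
    edge G i v ⊆ G := Finset.filter_subset _ _

lemma edge_eq_of_mem {m p : ℕ} {G : Finset (Fin m → Fin p)} {i : Fin m}
    {v a : Fin m → Fin p} (ha : a ∈ edge G i v) : edge G i a = edge G i v := by
  simp only [edge, Finset.mem_filter] at ha
  ext g
  simp only [edge, Finset.mem_filter]
  constructor
  · rintro ⟨hg, hag⟩
    exact ⟨hg, fun j hj => (hag j hj).trans (ha.2 j hj)⟩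
  · rintro ⟨hg, hgv⟩
    exact ⟨hg, fun j hj => (hgv j hj).trans (ha.2 j hj).symm⟩

lemma edge_erase {m p : ℕ} (G : Finset (Fin m → Fin p)) (i : Fin m)
    (v w : Fin m → Fin p) : edge (G.erase v) i w = (edge G i w).erase v := by
  ext g
  simp only [edge, Finset.mem_filter, Finset.mem_erase]
  tauto

/-- If every nonempty subclass `G ⊆ H ⊆ [p]^m` has average `k`-degree at most `D`
(so in particular every nonempty subclass has a vertex of `k`-degree at most `D`
inside its own one-inclusion graph), then the one-inclusion graph of `H` admits a
`k`-list orientation with maximum `k`-outdegree at most `D`. -/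
theorem stmt7 {m p k D : ℕ} (H : Finset (Fin m → Fin p))
    (havg : ∀ G : Finset (Fin m → Fin p), G ⊆ H → G.Nonempty →
      ∑ v ∈ G, (Finset.univ.filter fun i : Fin m => k < (edge G i v).card).card
        ≤ D * G.card) :
    ∃ σ : Fin m → (Fin m → Fin p) → Finset (Fin m → Fin p),
      (∀ i v, v ∈ H → σ i v ⊆ edge H i v ∧ (σ i v).card ≤ k) ∧
      (∀ i v w, v ∈ H → w ∈ H → edge H i v = edge H i w → σ i v = σ i w) ∧
      ∀ v ∈ H, (Finset.univ.filter fun i : Fin m => v ∉ σ i v).card ≤ D := by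
  classical
  revert havg
  induction H using Finset.strongInduction with
  | _ H ih =>
  intro havg
  rcases H.eq_empty_or_nonempty with rfl | hne
  · exact ⟨fun _ _ => ∅, fun i v hv => absurd hv (by simp), fun i v w hv => absurd hv (by simp),
      fun v hv => absurd hv (by simp)⟩
  -- find a vertex of k-degree ≤ D
  obtain ⟨v, hvH, hvD⟩ : ∃ v ∈ H,
      (Finset.univ.filter fun i : Fin m => k < (edge H i v).card).card ≤ D := by
    apply Finset.exists_le_of_sum_le hne
    have := havg H Finset.Subset.rfl hne
    simpa [Finset.sum_const, mul_comm] using this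
  -- inductive hypothesis on H.erase v
  obtain ⟨σ', h1, h2, h3⟩ := ih (H.erase v) (Finset.erase_ssubset hvH)
    (fun G hG hGne => havg G (hG.trans (Finset.erase_subset _ _)) hGne)
  -- the new orientation, as a function of the edge only
  set F : Fin m → Finset (Fin m → Fin p) → Finset (Fin m → Fin p) := fun i e =>
    if e.card ≤ k then e
    else if v ∈ e ∧ e.card = k + 1 then e.erase v
    else if h : (e.erase v).Nonempty then σ' i h.choose else ∅ with hF
  refine ⟨fun i w => F i (edge H i w), ?_, ?_, ?_⟩
  -- key facts in the "big, deep" case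
  case _ =>
    -- main subset/card claim
    intro i w hw
    set e := edge H i w with he
    have hwe : w ∈ e := mem_edge_self i hw
    by_cases hsmall : e.card ≤ k
    · rw [hF]; simp only [← he, if_pos hsmall]
      exact ⟨Finset.Subset.rfl, hsmall⟩
    by_cases hmid : v ∈ e ∧ e.card = k + 1
    · rw [hF]; simp only [← he, if_neg hsmall, if_pos hmid]
      refine ⟨Finset.erase_subset _ _, ?_⟩
      rw [Finset.card_erase_of_mem hmid.1, hmid.2]; omega
    · have hnonempty : (e.erase v).Nonempty := by
        by_cases hv : v ∈ e
        · have h2le : k + 2 ≤ e.card := by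
            rcases Nat.lt_or_ge (k+1) e.card with h | h
            · omega
            · exfalso; apply hmid; exact ⟨hv, by omega⟩
          rw [← Finset.card_pos, Finset.card_erase_of_mem hv]; omega
        · rw [Finset.erase_eq_of_notMem hv]; exact ⟨w, hwe⟩
      rw [hF]; simp only [← he, if_neg hsmall, if_neg hmid, dif_pos hnonempty]
      have hach := hnonempty.choose_spec
      have haH' : hnonempty.choose ∈ H.erase v := by
        have := (Finset.mem_erase.mp hach)
        exact Finset.mem_erase.mpr ⟨this.1, edge_subset H i w this.2⟩
      have hedge : edge (H.erase v) i hnonempty.choose = e.erase v := by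
        rw [edge_erase, edge_eq_of_mem (Finset.mem_erase.mp hach).2]
      obtain ⟨hsub, hcard⟩ := h1 i _ haH'
      rw [hedge] at hsub
      exact ⟨hsub.trans ((Finset.erase_subset _ _)), hcard⟩
  case _ =>
    intro i a b _ _ hab
    simp only [hab]
  case _ =>
    intro w hw
    by_cases hwv : w = v
    · subst hwv
      refine le_trans (Finset.card_le_card ?_) hvD
      intro i hi
      simp only [Finset.mem_filter, Finset.mem_univ, true_and] at hi ⊢
      by_contra hle
      push_neg at hle
      apply hi
      rw [hF]; simp only [if_pos hle]
      exact mem_edge_self i hw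
    · have hwH' : w ∈ H.erase v := Finset.mem_erase.mpr ⟨hwv, hw⟩
      refine le_trans (Finset.card_le_card ?_) (h3 w hwH')
      intro i hi
      simp only [Finset.mem_filter, Finset.mem_univ, true_and] at hi ⊢
      set e := edge H i w with he
      have hwe : w ∈ e := mem_edge_self i hw
      by_cases hsmall : e.card ≤ k
      · exfalso; apply hi; rw [hF]; simp only [if_pos hsmall]; exact hwe
      by_cases hmid : v ∈ e ∧ e.card = k + 1
      · exfalso; apply hi; rw [hF]; simp only [if_neg hsmall, if_pos hmid]
        exact Finset.mem_erase.mpr ⟨hwv, hwe⟩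
      · have hnonempty : (e.erase v).Nonempty := ⟨w, Finset.mem_erase.mpr ⟨hwv, hwe⟩⟩
        rw [hF] at hi; simp only [if_neg hsmall, if_neg hmid, dif_pos hnonempty] at hi
        -- σ' i hnonempty.choose = σ' i w
        have hach := hnonempty.choose_spec
        have haH' : hnonempty.choose ∈ H.erase v :=
          Finset.mem_erase.mpr ⟨(Finset.mem_erase.mp hach).1,
            edge_subset H i w (Finset.mem_erase.mp hach).2⟩
        have heq : σ' i hnonempty.choose = σ' i w := by
          apply h2 i _ _ haH' hwH'
          rw [edge_erase, edge_eq_of_mem (Finset.mem_erase.mp hach).2,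
            edge_erase, edge_eq_of_mem hwe]
        rw [heq] at hi
        exact hi
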